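/- If H is a connected graph with a perfect elimination ordering v_1 ≺ ... ≺ v_n, then the graph T on V(H) with edge set { {v_i, ν(v_i)} : i ≥ 2, v_i has an outgoing neighbour } is a spanning tree of H. -/

import Mathlib

/-- If `H` is a connected graph with a perfect elimination ordering `e`, then the
graph `T` on the vertices of `H` with edge set `{{e i, ν i}}` — over all `i` whose
vertex `e i` has an outgoing neighbour, `ν i` being the last outgoing neighbour of
`e i` — is a spanning tree of `H`. -/
lemma stmt8_aux_shortcut {n : ℕ} (H : SimpleGraph (Fin n)) (e : Equiv.Perm (Fin n))
    (hpeo : ∀ i : Fin n, H.IsClique {v | H.Adj v (e i) ∧ ∃ j, j < i ∧ v = e j}) :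
    ∀ N : ℕ, ∀ i j : Fin n, j < i → ∀ w : H.Walk (e i) (e j), w.length ≤ N →
      ∃ k, k < i ∧ H.Adj (e k) (e i) ∧
        ∃ w' : H.Walk (e k) (e j), w'.length < w.length := by
  intro N
  induction N with
  | zero =>
    intro i j hji w hw
    have : e i = e j :=
      SimpleGraph.Walk.eq_of_length_eq_zero (Nat.le_zero.mp hw)
    exact absurd (e.injective this) (Ne.symm hji.ne)
  | succ N ih =>
    intro i j hji w hw
    have hne : e i ≠ e j := fun h => (Ne.symm hji.ne) (e.injective h)
    obtain ⟨x, h, w0, rfl⟩ := SimpleGraph.Walk.exists_eq_cons_of_ne hne w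
    have hx : x = e (e.symm x) := (e.apply_symm_apply x).symm
    set k₁ := e.symm x with hk₁
    have h' : H.Adj (e i) (e k₁) := by rwa [← hx]
    let w' : H.Walk (e k₁) (e j) := w0.copy hx rfl
    have hlw' : w'.length = w0.length := SimpleGraph.Walk.length_copy _ _ _
    have hlencons : (SimpleGraph.Walk.cons h w0).length = w0.length + 1 :=
      SimpleGraph.Walk.length_cons _ _
    have hk₁i : k₁ ≠ i := fun hh => H.irrefl (by rwa [hh] at h')
    have hwlen : w'.length ≤ N := by omega
    rcases lt_or_gt_of_ne hk₁i with hlt | hgt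
    · exact ⟨k₁, hlt, h'.symm, w', by omega⟩
    · have hjk₁ : j < k₁ := lt_trans hji hgt
      obtain ⟨l, hl, hadjl, w'', hw''⟩ := ih k₁ j hjk₁ w' hwlen
      by_cases hli : l = i
      · subst hli
        obtain ⟨k, hk, hadj, w''', hw'''⟩ := ih l j hji w'' (by omega)
        exact ⟨k, hk, hadj, w''', by omega⟩
      · have hmemi : e i ∈ {v | H.Adj v (e k₁) ∧ ∃ j, j < k₁ ∧ v = e j} :=
          ⟨h', i, hgt, rfl⟩
        have hmeml : e l ∈ {v | H.Adj v (e k₁) ∧ ∃ j, j < k₁ ∧ v = e j} :=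
          ⟨hadjl, l, hl, rfl⟩
        have hneli : e l ≠ e i := fun hh => hli (e.injective hh)
        have hadjli : H.Adj (e l) (e i) := hpeo k₁ hmeml hmemi hneli
        rcases lt_or_gt_of_ne hli with hlt2 | hgt2
        · exact ⟨l, hlt2, hadjli, w'', by omega⟩
        · obtain ⟨k, hk, hadj, w''', hw'''⟩ := ih i j hji
            (SimpleGraph.Walk.cons hadjli.symm w'')
            (by rw [SimpleGraph.Walk.length_cons]; omega)
          rw [SimpleGraph.Walk.length_cons] at hw'''
          exact ⟨k, hk, hadj, w''', by omega⟩

theorem stmt8 {n : ℕ} (H : SimpleGraph (Fin n)) (hconn : H.Connected)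
    (e : Equiv.Perm (Fin n))
    (hpeo : ∀ i : Fin n, H.IsClique {v | H.Adj v (e i) ∧ ∃ j, j < i ∧ v = e j})
    (ν : Fin n → Fin n)
    (hν : ∀ i : Fin n, (∃ j, j < i ∧ H.Adj (e j) (e i)) →
      ∃ j, j < i ∧ ν i = e j ∧ H.Adj (e j) (e i) ∧
        ∀ j', j' < i → H.Adj (e j') (e i) → j' ≤ j)
    (T : SimpleGraph (Fin n))
    (hT : ∀ u v, T.Adj u v ↔ u ≠ v ∧ ∃ i : Fin n,
      (∃ j, j < i ∧ H.Adj (e j) (e i)) ∧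
        ((u = e i ∧ v = ν i) ∨ (v = e i ∧ u = ν i))) :
    T.IsTree ∧ T ≤ H := by
  classical
  have hn : 0 < n := hconn.nonempty.elim fun v => v.pos
  set i0 : Fin n := ⟨0, hn⟩ with hi0
  have hA : ∀ i : Fin n, i ≠ i0 → ∃ j, j < i ∧ H.Adj (e j) (e i) := by
    intro i hi
    have h0i : i0 < i := by
      rw [Fin.lt_def]
      exact Nat.pos_of_ne_zero fun h => hi (Fin.ext (by simp [hi0, h]))
    obtain ⟨w⟩ := hconn.preconnected (e i) (e i0)
    obtain ⟨k, hk, hadj, -⟩ := stmt8_aux_shortcut H e hpeo w.length i i0 h0i w le_rfl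
    exact ⟨k, hk, hadj⟩
  have hTH : T ≤ H := by
    intro u v huv
    rw [hT] at huv
    obtain ⟨hne, i, hcond, hcase⟩ := huv
    obtain ⟨j, hj, hνj, hadj, -⟩ := hν i hcond
    rcases hcase with ⟨rfl, rfl⟩ | ⟨rfl, rfl⟩
    · rw [hνj]; exact hadj.symm
    · rw [hνj]; exact hadj
  have hstep : ∀ u v, T.Adj u v →
      (e.symm v < e.symm u ∧ v = ν (e.symm u)) ∨
      (e.symm u < e.symm v ∧ u = ν (e.symm v)) := by
    intro u v huv
    rw [hT] at huv
    obtain ⟨hne, i, hcond, hcase⟩ := huv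
    obtain ⟨j, hj, hνj, hadj, -⟩ := hν i hcond
    rcases hcase with ⟨rfl, rfl⟩ | ⟨rfl, rfl⟩
    · left
      refine ⟨?_, by rw [e.symm_apply_apply]⟩
      rw [hνj, e.symm_apply_apply, e.symm_apply_apply]; exact hj
    · right
      refine ⟨?_, by rw [e.symm_apply_apply]⟩
      rw [hνj, e.symm_apply_apply, e.symm_apply_apply]; exact hj
  have hTadj : ∀ i : Fin n, i ≠ i0 → T.Adj (ν i) (e i) := by
    intro i hi
    obtain ⟨j, hj, hνj, hadj, -⟩ := hν i (hA i hi)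
    rw [hT]
    refine ⟨?_, i, hA i hi, Or.inr ⟨rfl, rfl⟩⟩
    rw [hνj]
    exact fun h => hj.ne (e.injective h)
  have hreach : ∀ m : ℕ, ∀ i : Fin n, i.val ≤ m → T.Reachable (e i0) (e i) := by
    intro m
    induction m with
    | zero =>
      intro i hi
      have : i = i0 := Fin.ext (by simpa [hi0] using Nat.le_zero.mp hi)
      rw [this]
    | succ m ih =>
      intro i hi
      by_cases h0 : i = i0
      · rw [h0]
      · obtain ⟨j, hj, hνj, hadj, -⟩ := hν i (hA i h0)
        have hjv : j.val < i.val := hj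
        have h1 : T.Reachable (e i0) (e j) := ih j (by omega)
        have h2 : T.Adj (e j) (e i) := by
          have := hTadj i h0; rwa [hνj] at this
        exact h1.trans h2.reachable
  have hTconn : T.Connected := by
    rw [SimpleGraph.connected_iff]
    refine ⟨fun u v => ?_, ⟨e i0⟩⟩
    have h1 := hreach (e.symm u).val (e.symm u) le_rfl
    have h2 := hreach (e.symm v).val (e.symm v) le_rfl
    rw [e.apply_symm_apply] at h1 h2
    exact h1.symm.trans h2
  have hacyc : T.IsAcyclic := by
    intro v c hc
    have hvmem : v ∈ c.support := c.start_mem_support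
    obtain ⟨u, hu, hmax⟩ := Finset.exists_max_image c.support.toFinset
      (fun x => ((e.symm x : Fin n) : ℕ)) ⟨v, by simpa using hvmem⟩
    rw [List.mem_toFinset] at hu
    set c' := c.rotate u hu with hc'def
    have hc' : c'.IsCycle := hc.rotate hu
    have hsupp : ∀ x, x ∈ c'.support → x ∈ c.support := by
      intro z hz
      rw [SimpleGraph.Walk.mem_support_iff] at hz
      rcases hz with rfl | hz
      · exact hu
      · exact List.mem_of_mem_tail
          (((SimpleGraph.Walk.support_rotate c u hu).mem_iff).mp hz)
    have hnil : ¬ c'.Nil := hc'.not_nil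
    have hcc := SimpleGraph.Walk.cons_tail_eq c' hnil
    set x := c'.getVert 1 with hxdef
    have hadjux : T.Adj u x := c'.adj_snd hnil
    have hcyc2 := (SimpleGraph.Walk.cons_isCycle_iff c'.tail hadjux).mp
      (by rw [hcc]; exact hc')
    obtain ⟨htlpath, hnotmem⟩ := hcyc2
    have hlen3 : 3 ≤ c'.length := hc'.three_le_length
    have htl_len : c'.tail.length + 1 = c'.length :=
      SimpleGraph.Walk.length_tail_add_one hnil
    have htl_nnil : ¬ c'.tail.reverse.Nil := by
      rw [SimpleGraph.Walk.not_nil_iff_lt_length, SimpleGraph.Walk.length_reverse]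
      omega
    set y := c'.tail.reverse.getVert 1 with hydef
    have hadjuy : T.Adj u y := c'.tail.reverse.adj_snd htl_nnil
    have hccy := SimpleGraph.Walk.cons_tail_eq c'.tail.reverse htl_nnil
    have hyedge : s(u, y) ∈ c'.tail.reverse.edges := by
      rw [← hccy, SimpleGraph.Walk.edges_cons]
      exact List.mem_cons_self
    have hyedge' : s(u, y) ∈ c'.tail.edges := by
      rw [SimpleGraph.Walk.edges_reverse, List.mem_reverse] at hyedge
      exact hyedge
    have hxmem : x ∈ c.support := by
      refine hsupp x (SimpleGraph.Walk.mem_support_iff_exists_getVert.mpr ⟨1, rfl, by omega⟩)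
    have hymem : y ∈ c.support := by
      refine hsupp y ?_
      have h1 : y ∈ c'.tail.reverse.support :=
        SimpleGraph.Walk.mem_support_iff_exists_getVert.mpr
          ⟨1, rfl, by rw [SimpleGraph.Walk.length_reverse]; omega⟩
      rw [SimpleGraph.Walk.support_reverse, List.mem_reverse] at h1
      rw [← hcc, SimpleGraph.Walk.support_cons]
      exact List.mem_cons_of_mem _ h1
    have hmaxx : ((e.symm x : Fin n) : ℕ) ≤ ((e.symm u : Fin n) : ℕ) :=
      hmax x (List.mem_toFinset.mpr hxmem)
    have hmaxy : ((e.symm y : Fin n) : ℕ) ≤ ((e.symm u : Fin n) : ℕ) :=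
      hmax y (List.mem_toFinset.mpr hymem)
    have hxν : x = ν (e.symm u) := by
      rcases hstep u x hadjux with ⟨-, h⟩ | ⟨hlt, -⟩
      · exact h
      · exact absurd (Fin.lt_def.mp hlt) (by omega)
    have hyν : y = ν (e.symm u) := by
      rcases hstep u y hadjuy with ⟨-, h⟩ | ⟨hlt, -⟩
      · exact h
      · exact absurd (Fin.lt_def.mp hlt) (by omega)
    apply hnotmem
    have hxy : c'.getVert 1 = y := hxν.trans hyν.symm
    have hse : s(u, c'.getVert 1) = s(u, y) := congrArg (fun z => s(u, z)) hxy
    rw [hse]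
    exact hyedge'
  exact ⟨⟨hTconn, hacyc⟩, hTH⟩
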